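/- Let Γ be a temporal theory over alphabet 𝒜 and Γ' any temporal theory over the same alphabet 𝒜. Then, for any length λ, TSM(Γ ∪ Γ') = { ⟨H',T'⟩|_𝒜 | ⟨H',T'⟩ ∈ TSM(σ(Γ) ∪ Γ') }, where TSM(Δ) denotes the set of temporal stable models of Δ of length λ. In other words, Γ and σ(Γ) are strongly equivalent modulo the auxiliary atoms not in 𝒜. -/

import Mathlib

/-- Syntax of temporal formulas over an alphabet of atoms `α`:
`⊥`, atoms, `∧`, `∨`, `→`, previous `●`, since `S`, trigger `T`,
next `○`, until `U`, release `R`. -/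
inductive TForm (α : Type) : Type
  | bot   : TForm α
  | atom  : α → TForm α
  | conj  : TForm α → TForm α → TForm α
  | disj  : TForm α → TForm α → TForm α
  | impl  : TForm α → TForm α → TForm α
  | prev  : TForm α → TForm α
  | since : TForm α → TForm α → TForm α
  | trig  : TForm α → TForm α → TForm α
  | next  : TForm α → TForm α
  | untl  : TForm α → TForm α → TForm α
  | rels  : TForm α → TForm α → TForm α

/-- THT_f satisfaction `⟨H,T⟩,k ⊨ φ` for finite traces of length `n`
(time points are `0 ≤ k < n`). -/
def sat {α : Type} (n : ℕ) : (ℕ → Set α) → (ℕ → Set α) → ℕ → TForm α → Prop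
  | _, _, _, .bot => False
  | H, _, k, .atom a => a ∈ H k
  | H, T, k, .conj φ ψ => sat n H T k φ ∧ sat n H T k ψ
  | H, T, k, .disj φ ψ => sat n H T k φ ∨ sat n H T k ψ
  | H, T, k, .impl φ ψ =>
      (sat n H T k φ → sat n H T k ψ) ∧ (sat n T T k φ → sat n T T k ψ)
  | H, T, k, .prev φ => 0 < k ∧ sat n H T (k - 1) φ
  | H, T, k, .since φ ψ =>
      ∃ j, j ≤ k ∧ sat n H T j ψ ∧ ∀ i, j < i → i ≤ k → sat n H T i φ
  | H, T, k, .trig φ ψ =>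
      ∀ j, j ≤ k → sat n H T j ψ ∨ ∃ i, j < i ∧ i ≤ k ∧ sat n H T i φ
  | H, T, k, .next φ => k + 1 < n ∧ sat n H T (k + 1) φ
  | H, T, k, .untl φ ψ =>
      ∃ j, k ≤ j ∧ j < n ∧ sat n H T j ψ ∧ ∀ i, k ≤ i → i < j → sat n H T i φ
  | H, T, k, .rels φ ψ =>
      ∀ j, k ≤ j → j < n → sat n H T j ψ ∨ ∃ i, k ≤ i ∧ i < j ∧ sat n H T i φ

open Classical in
/-- The three-valued valuation `m[k,φ] ∈ {0,1,2}` associated with an HT-trace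
`⟨H,T⟩` of length `n` (an empty `Finset.inf` is `⊤ = 2`, an empty `Finset.sup` is `⊥ = 0`). -/
noncomputable def val {α : Type} (H T : ℕ → Set α) (n : ℕ) : ℕ → TForm α → Fin 3
  | _, .bot => 0
  | k, .atom a => if a ∈ H k then 2 else if a ∈ T k then 1 else 0
  | k, .conj φ ψ => min (val H T n k φ) (val H T n k ψ)
  | k, .disj φ ψ => max (val H T n k φ) (val H T n k ψ)
  | k, .impl φ ψ => if val H T n k φ ≤ val H T n k ψ then 2 else val H T n k ψ
  | k, .prev φ => if k = 0 then 0 else val H T n (k - 1) φ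
  | k, .since φ ψ =>
      (Finset.range (k + 1)).sup fun j =>
        min (val H T n j ψ) ((Finset.Ioc j k).inf fun i => val H T n i φ)
  | k, .trig φ ψ =>
      (Finset.range (k + 1)).inf fun j =>
        max (val H T n j ψ) ((Finset.Ioc j k).sup fun i => val H T n i φ)
  | k, .next φ => if k + 1 = n then 0 else val H T n (k + 1) φ
  | k, .untl φ ψ =>
      (Finset.Ico k n).sup fun j =>
        min (val H T n j ψ) ((Finset.Ico k j).inf fun i => val H T n i φ)
  | k, .rels φ ψ =>
      (Finset.Ico k n).inf fun j =>
        max (val H T n j ψ) ((Finset.Ico k j).sup fun i => val H T n i φ)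

/-- Renaming of atoms in a formula. -/
def TForm.map {α β : Type} (f : α → β) : TForm α → TForm β
  | .bot => .bot
  | .atom a => .atom (f a)
  | .conj φ ψ => .conj (φ.map f) (ψ.map f)
  | .disj φ ψ => .disj (φ.map f) (ψ.map f)
  | .impl φ ψ => .impl (φ.map f) (ψ.map f)
  | .prev φ => .prev (φ.map f)
  | .since φ ψ => .since (φ.map f) (ψ.map f)
  | .trig φ ψ => .trig (φ.map f) (ψ.map f)
  | .next φ => .next (φ.map f)
  | .untl φ ψ => .untl (φ.map f) (ψ.map f)
  | .rels φ ψ => .rels (φ.map f) (ψ.map f)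

/-- The set of subformulas of a formula (including the formula itself). -/
def subf {α : Type} : TForm α → Set (TForm α)
  | .bot => {.bot}
  | .atom a => {.atom a}
  | .conj φ ψ => insert (.conj φ ψ) (subf φ ∪ subf ψ)
  | .disj φ ψ => insert (.disj φ ψ) (subf φ ∪ subf ψ)
  | .impl φ ψ => insert (.impl φ ψ) (subf φ ∪ subf ψ)
  | .prev φ => insert (.prev φ) (subf φ)
  | .since φ ψ => insert (.since φ ψ) (subf φ ∪ subf ψ)
  | .trig φ ψ => insert (.trig φ ψ) (subf φ ∪ subf ψ)
  | .next φ => insert (.next φ) (subf φ)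
  | .untl φ ψ => insert (.untl φ ψ) (subf φ ∪ subf ψ)
  | .rels φ ψ => insert (.rels φ ψ) (subf φ ∪ subf ψ)

/-- The set of subformulas of the formulas of a theory `Γ`. -/
def subfTh {α : Type} (Γ : Set (TForm α)) : Set (TForm α) := ⋃ φ ∈ Γ, subf φ

/-- The extended alphabet `𝒜⁺`: original atoms (`Sum.inl`) plus a fresh
labelling atom `L_μ` (`Sum.inr μ`) for every formula `μ` over `𝒜`. -/
abbrev ExtAlph (α : Type) := α ⊕ TForm α

/-- The label `L_μ` of a formula `μ`, as a formula over the extended alphabet: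
`L_⊥ = ⊥`, `L_a = a` for atoms `a`, and a fresh atom `Sum.inr μ` otherwise. -/
def lab {α : Type} : TForm α → TForm (ExtAlph α)
  | .bot => .bot
  | .atom a => .atom (Sum.inl a)
  | μ => .atom (Sum.inr μ)

/-- Negation `¬φ := φ → ⊥`. -/
def tneg {β : Type} (φ : TForm β) : TForm β := .impl φ .bot

/-- Truth `⊤ := ¬⊥`. -/
def ttop {β : Type} : TForm β := tneg .bot

/-- Double implication `φ ↔ ψ`. -/
def tiff {β : Type} (φ ψ : TForm β) : TForm β := .conj (.impl φ ψ) (.impl ψ φ)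

/-- Always `□φ := ⊥ R φ`. -/
def talways {β : Type} (φ : TForm β) : TForm β := .rels .bot φ

/-- Weak next `○̂φ := ¬○⊤ ∨ ○φ`. -/
def twnext {β : Type} (φ : TForm β) : TForm β := .disj (tneg (.next ttop)) (.next φ)

/-- The definition `η(μ)` of the label `L_μ` of a formula `μ`. -/
def eta {α : Type} : TForm α → Set (TForm (ExtAlph α))
  | .bot => ∅
  | .atom _ => ∅
  | .conj φ ψ =>
      {talways (tiff (lab (.conj φ ψ)) (.conj (lab φ) (lab ψ)))}
  | .disj φ ψ =>
      {talways (tiff (lab (.disj φ ψ)) (.disj (lab φ) (lab ψ)))}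
  | .impl φ ψ =>
      {talways (tiff (lab (.impl φ ψ)) (.impl (lab φ) (lab ψ)))}
  | .prev φ =>
      {twnext (talways (tiff (lab (.prev φ)) (.prev (lab φ)))),
       tneg (lab (.prev φ))}
  | .since φ ψ =>
      {twnext (talways (tiff (lab (.since φ ψ))
          (.disj (lab ψ) (.conj (lab φ) (.prev (lab (.since φ ψ))))))),
       tiff (lab (.since φ ψ)) (lab ψ)}
  | .trig φ ψ =>
      {twnext (talways (tiff (lab (.trig φ ψ))
          (.conj (lab ψ) (.disj (lab φ) (.prev (lab (.trig φ ψ))))))),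
       tiff (lab (.trig φ ψ)) (lab ψ)}
  | .next φ =>
      {twnext (talways (tiff (.prev (lab (.next φ))) (lab φ))),
       talways (.impl (tneg (.next ttop)) (tneg (lab (.next φ))))}
  | .untl φ ψ =>
      {twnext (talways (tiff (.prev (lab (.untl φ ψ)))
          (.disj (.prev (lab ψ)) (.conj (.prev (lab φ)) (lab (.untl φ ψ)))))),
       talways (.impl (tneg (.next ttop)) (tiff (lab (.untl φ ψ)) (lab ψ)))}
  | .rels φ ψ =>
      {twnext (talways (tiff (.prev (lab (.rels φ ψ)))
          (.conj (.prev (lab ψ)) (.disj (.prev (lab φ)) (lab (.rels φ ψ)))))),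
       talways (.impl (tneg (.next ttop)) (tiff (lab (.rels φ ψ)) (lab ψ)))}

/-- The translation `σ(Γ) = {L_φ | φ ∈ Γ} ∪ ⋃ {η(μ) | μ ∈ subf(Γ)}`. -/
def sigmaT {α : Type} (Γ : Set (TForm α)) : Set (TForm (ExtAlph α)) :=
  (lab '' Γ) ∪ ⋃ μ ∈ subfTh Γ, eta μ

/-- Restriction of a trace over the extended alphabet to the original alphabet `𝒜`. -/
def restrict {α : Type} (X : ℕ → Set (ExtAlph α)) : ℕ → Set α :=
  fun k => {a | Sum.inl a ∈ X k}

/-- Extend a trace of length `n` (indexed by `Fin n`) to all of `ℕ` (by `∅`). -/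
def pad {β : Type} (n : ℕ) (f : Fin n → Set β) : ℕ → Set β :=
  fun k => if h : k < n then f ⟨k, h⟩ else ∅

/-- The set of temporal stable models of length `n` of a theory `Δ`: total
traces `⟨T,T⟩` satisfying `Δ` such that no strictly smaller `H < T` gives an
HT-model `⟨H,T⟩` of `Δ`. -/
def TSM {β : Type} (n : ℕ) (Δ : Set (TForm β)) : Set (Fin n → Set β) :=
  {Tt | (∀ δ ∈ Δ, sat n (pad n Tt) (pad n Tt) 0 δ) ∧
        ¬ ∃ Hh : Fin n → Set β, (∀ i, Hh i ⊆ Tt i) ∧ Hh ≠ Tt ∧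
            ∀ δ ∈ Δ, sat n (pad n Hh) (pad n Tt) 0 δ}

section Basic

variable {α β : Type}

/-- Persistence. -/
theorem sat_mono {n : ℕ} {H T : ℕ → Set α} (hs : ∀ i, H i ⊆ T i) :
    ∀ (φ : TForm α) (k : ℕ), sat n H T k φ → sat n T T k φ := by
  intro φ
  induction φ with
  | bot => intro k h; exact h
  | atom a => intro k h; exact hs k h
  | conj φ ψ ihφ ihψ => intro k h; exact ⟨ihφ k h.1, ihψ k h.2⟩
  | disj φ ψ ihφ ihψ =>
      intro k h; rcases h with h | h
      · exact Or.inl (ihφ k h)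
      · exact Or.inr (ihψ k h)
  | impl φ ψ ihφ ihψ => intro k h; exact ⟨h.2, h.2⟩
  | prev φ ih => intro k h; exact ⟨h.1, ih _ h.2⟩
  | since φ ψ ihφ ihψ =>
      intro k h
      obtain ⟨j, hj, hψ, hall⟩ := h
      exact ⟨j, hj, ihψ j hψ, fun i h1 h2 => ihφ i (hall i h1 h2)⟩
  | trig φ ψ ihφ ihψ =>
      intro k h j hj
      rcases h j hj with h | ⟨i, h1, h2, h3⟩
      · exact Or.inl (ihψ j h)
      · exact Or.inr ⟨i, h1, h2, ihφ i h3⟩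
  | next φ ih => intro k h; exact ⟨h.1, ih _ h.2⟩
  | untl φ ψ ihφ ihψ =>
      intro k h
      obtain ⟨j, hj, hjn, hψ, hall⟩ := h
      exact ⟨j, hj, hjn, ihψ j hψ, fun i h1 h2 => ihφ i (hall i h1 h2)⟩
  | rels φ ψ ihφ ihψ =>
      intro k h j hj hjn
      rcases h j hj hjn with h | ⟨i, h1, h2, h3⟩
      · exact Or.inl (ihψ j h)
      · exact Or.inr ⟨i, h1, h2, ihφ i h3⟩

/-- Satisfaction of a renamed formula. -/
theorem sat_map_aux (f : α → β) {n : ℕ} :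
    ∀ (φ : TForm α) (H T : ℕ → Set β) (k : ℕ),
      sat n H T k (TForm.map f φ) ↔
        sat n (fun i => f ⁻¹' H i) (fun i => f ⁻¹' T i) k φ := by
  intro φ
  induction φ with
  | bot => intro H T k; simp [TForm.map, sat]
  | atom a => intro H T k; simp [TForm.map, sat]
  | conj φ ψ ihφ ihψ => intro H T k; simp [TForm.map, sat, ihφ, ihψ]
  | disj φ ψ ihφ ihψ => intro H T k; simp [TForm.map, sat, ihφ, ihψ]
  | impl φ ψ ihφ ihψ => intro H T k; simp [TForm.map, sat, ihφ, ihψ]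
  | prev φ ih => intro H T k; simp [TForm.map, sat, ih]
  | since φ ψ ihφ ihψ => intro H T k; simp [TForm.map, sat, ihφ, ihψ]
  | trig φ ψ ihφ ihψ => intro H T k; simp [TForm.map, sat, ihφ, ihψ]
  | next φ ih => intro H T k; simp [TForm.map, sat, ih]
  | untl φ ψ ihφ ihψ => intro H T k; simp [TForm.map, sat, ihφ, ihψ]
  | rels φ ψ ihφ ihψ => intro H T k; simp [TForm.map, sat, ihφ, ihψ]

theorem sat_map (f : α → β) {n : ℕ} (H T : ℕ → Set β) (φ : TForm α) (k : ℕ) :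
    sat n H T k (TForm.map f φ) ↔
      sat n (fun i => f ⁻¹' H i) (fun i => f ⁻¹' T i) k φ :=
  sat_map_aux f φ H T k

/-- Atoms occurring in a formula. -/
def occ : TForm α → Set α
  | .bot => ∅
  | .atom a => {a}
  | .conj φ ψ => occ φ ∪ occ ψ
  | .disj φ ψ => occ φ ∪ occ ψ
  | .impl φ ψ => occ φ ∪ occ ψ
  | .prev φ => occ φ
  | .since φ ψ => occ φ ∪ occ ψ
  | .trig φ ψ => occ φ ∪ occ ψ
  | .next φ => occ φ
  | .untl φ ψ => occ φ ∪ occ ψ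
  | .rels φ ψ => occ φ ∪ occ ψ

/-- Satisfaction only depends on the occurring atoms. -/
theorem sat_congr {n : ℕ} :
    ∀ (φ : TForm α) (H T H' T' : ℕ → Set α) (k : ℕ),
      (∀ i a, a ∈ occ φ → (a ∈ H i ↔ a ∈ H' i)) →
      (∀ i a, a ∈ occ φ → (a ∈ T i ↔ a ∈ T' i)) →
      (sat n H T k φ ↔ sat n H' T' k φ) := by
  intro φ
  induction φ with
  | bot => intro k _ _; simp [sat]
  | atom a => intro H T H' T' k hH hT; simpa [sat] using hH k a (by simp [occ])
  | conj φ ψ ihφ ihψ =>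
      intro H T H' T' k hH hT
      have h1 := fun i a (h : a ∈ occ φ) => hH i a (Or.inl h)
      have h2 := fun i a (h : a ∈ occ φ) => hT i a (Or.inl h)
      have h3 := fun i a (h : a ∈ occ ψ) => hH i a (Or.inr h)
      have h4 := fun i a (h : a ∈ occ ψ) => hT i a (Or.inr h)
      simp only [sat]; rw [ihφ H T H' T' k h1 h2, ihψ H T H' T' k h3 h4]
  | disj φ ψ ihφ ihψ =>
      intro H T H' T' k hH hT
      have h1 := fun i a (h : a ∈ occ φ) => hH i a (Or.inl h)
      have h2 := fun i a (h : a ∈ occ φ) => hT i a (Or.inl h)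
      have h3 := fun i a (h : a ∈ occ ψ) => hH i a (Or.inr h)
      have h4 := fun i a (h : a ∈ occ ψ) => hT i a (Or.inr h)
      simp only [sat]; rw [ihφ H T H' T' k h1 h2, ihψ H T H' T' k h3 h4]
  | impl φ ψ ihφ ihψ =>
      intro H T H' T' k hH hT
      have h1 := fun i a (h : a ∈ occ φ) => hH i a (Or.inl h)
      have h2 := fun i a (h : a ∈ occ φ) => hT i a (Or.inl h)
      have h3 := fun i a (h : a ∈ occ ψ) => hH i a (Or.inr h)
      have h4 := fun i a (h : a ∈ occ ψ) => hT i a (Or.inr h)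
      simp only [sat]
      rw [ihφ H T H' T' k h1 h2, ihψ H T H' T' k h3 h4, ihφ T T T' T' k h2 h2, ihψ T T T' T' k h4 h4]
  | prev φ ih =>
      intro H T H' T' k hH hT
      simp only [sat]; rw [ih H T H' T' (k-1) hH hT]
  | since φ ψ ihφ ihψ =>
      intro H T H' T' k hH hT
      have h1 := fun i a (h : a ∈ occ φ) => hH i a (Or.inl h)
      have h2 := fun i a (h : a ∈ occ φ) => hT i a (Or.inl h)
      have h3 := fun i a (h : a ∈ occ ψ) => hH i a (Or.inr h)
      have h4 := fun i a (h : a ∈ occ ψ) => hT i a (Or.inr h)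
      simp only [sat]
      constructor
      · rintro ⟨j, hj, hψ, hall⟩
        exact ⟨j, hj, (ihψ H T H' T' j h3 h4).1 hψ, fun i u v => (ihφ H T H' T' i h1 h2).1 (hall i u v)⟩
      · rintro ⟨j, hj, hψ, hall⟩
        exact ⟨j, hj, (ihψ H T H' T' j h3 h4).2 hψ, fun i u v => (ihφ H T H' T' i h1 h2).2 (hall i u v)⟩
  | trig φ ψ ihφ ihψ =>
      intro H T H' T' k hH hT
      have h1 := fun i a (h : a ∈ occ φ) => hH i a (Or.inl h)
      have h2 := fun i a (h : a ∈ occ φ) => hT i a (Or.inl h)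
      have h3 := fun i a (h : a ∈ occ ψ) => hH i a (Or.inr h)
      have h4 := fun i a (h : a ∈ occ ψ) => hT i a (Or.inr h)
      simp only [sat]
      constructor
      · intro h j hj
        rcases h j hj with h | ⟨i, u, v, w⟩
        · exact Or.inl ((ihψ H T H' T' j h3 h4).1 h)
        · exact Or.inr ⟨i, u, v, (ihφ H T H' T' i h1 h2).1 w⟩
      · intro h j hj
        rcases h j hj with h | ⟨i, u, v, w⟩
        · exact Or.inl ((ihψ H T H' T' j h3 h4).2 h)
        · exact Or.inr ⟨i, u, v, (ihφ H T H' T' i h1 h2).2 w⟩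
  | next φ ih =>
      intro H T H' T' k hH hT
      simp only [sat]; rw [ih H T H' T' (k+1) hH hT]
  | untl φ ψ ihφ ihψ =>
      intro H T H' T' k hH hT
      have h1 := fun i a (h : a ∈ occ φ) => hH i a (Or.inl h)
      have h2 := fun i a (h : a ∈ occ φ) => hT i a (Or.inl h)
      have h3 := fun i a (h : a ∈ occ ψ) => hH i a (Or.inr h)
      have h4 := fun i a (h : a ∈ occ ψ) => hT i a (Or.inr h)
      simp only [sat]
      constructor
      · rintro ⟨j, hj, hjn, hψ, hall⟩
        exact ⟨j, hj, hjn, (ihψ H T H' T' j h3 h4).1 hψ, fun i u v => (ihφ H T H' T' i h1 h2).1 (hall i u v)⟩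
      · rintro ⟨j, hj, hjn, hψ, hall⟩
        exact ⟨j, hj, hjn, (ihψ H T H' T' j h3 h4).2 hψ, fun i u v => (ihφ H T H' T' i h1 h2).2 (hall i u v)⟩
  | rels φ ψ ihφ ihψ =>
      intro H T H' T' k hH hT
      have h1 := fun i a (h : a ∈ occ φ) => hH i a (Or.inl h)
      have h2 := fun i a (h : a ∈ occ φ) => hT i a (Or.inl h)
      have h3 := fun i a (h : a ∈ occ ψ) => hH i a (Or.inr h)
      have h4 := fun i a (h : a ∈ occ ψ) => hT i a (Or.inr h)
      simp only [sat]
      constructor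
      · intro h j hj hjn
        rcases h j hj hjn with h | ⟨i, u, v, w⟩
        · exact Or.inl ((ihψ H T H' T' j h3 h4).1 h)
        · exact Or.inr ⟨i, u, v, (ihφ H T H' T' i h1 h2).1 w⟩
      · intro h j hj hjn
        rcases h j hj hjn with h | ⟨i, u, v, w⟩
        · exact Or.inl ((ihψ H T H' T' j h3 h4).2 h)
        · exact Or.inr ⟨i, u, v, (ihφ H T H' T' i h1 h2).2 w⟩

theorem occ_map (f : α → β) : ∀ φ : TForm α, occ (TForm.map f φ) ⊆ Set.range f := by
  intro φ
  induction φ with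
  | bot => simp [TForm.map, occ]
  | atom a => simp [TForm.map, occ]
  | conj φ ψ ihφ ihψ => simpa [TForm.map, occ] using ⟨ihφ, ihψ⟩
  | disj φ ψ ihφ ihψ => simpa [TForm.map, occ] using ⟨ihφ, ihψ⟩
  | impl φ ψ ihφ ihψ => simpa [TForm.map, occ] using ⟨ihφ, ihψ⟩
  | prev φ ih => simpa [TForm.map, occ] using ih
  | since φ ψ ihφ ihψ => simpa [TForm.map, occ] using ⟨ihφ, ihψ⟩
  | trig φ ψ ihφ ihψ => simpa [TForm.map, occ] using ⟨ihφ, ihψ⟩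
  | next φ ih => simpa [TForm.map, occ] using ih
  | untl φ ψ ihφ ihψ => simpa [TForm.map, occ] using ⟨ihφ, ihψ⟩
  | rels φ ψ ihφ ihψ => simpa [TForm.map, occ] using ⟨ihφ, ihψ⟩

end Basic
section Gadgets

variable {α β : Type} {n : ℕ}

theorem sat_tneg {H T : ℕ → Set β} {k : ℕ} {φ : TForm β} :
    sat n H T k (tneg φ) ↔ ¬ sat n H T k φ ∧ ¬ sat n T T k φ := by
  simp [tneg, sat]

theorem sat_ttop {H T : ℕ → Set β} {k : ℕ} : sat n H T k (ttop : TForm β) := by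
  simp [ttop, tneg, sat]

theorem sat_tiff {H T : ℕ → Set β} {k : ℕ} {φ ψ : TForm β} :
    sat n H T k (tiff φ ψ) ↔
      ((sat n H T k φ ↔ sat n H T k ψ) ∧ (sat n T T k φ ↔ sat n T T k ψ)) := by
  simp only [tiff, sat]
  tauto

theorem sat_talways {H T : ℕ → Set β} {k : ℕ} {φ : TForm β} :
    sat n H T k (talways φ) ↔ ∀ j, k ≤ j → j < n → sat n H T j φ := by
  simp [talways, sat]

theorem sat_next_ttop {H T : ℕ → Set β} {k : ℕ} :
    sat n H T k (.next (ttop : TForm β)) ↔ k + 1 < n := by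
  simp [sat, sat_ttop]

theorem sat_twnext {H T : ℕ → Set β} {k : ℕ} {φ : TForm β} :
    sat n H T k (twnext φ) ↔ (k + 1 < n → sat n H T (k + 1) φ) := by
  simp only [twnext, sat, sat_tneg, sat_next_ttop]
  by_cases h : k + 1 < n <;> simp [h, sat_ttop]

/-- Satisfaction of `○̂□φ` at time `0`. -/
theorem sat_wa {H T : ℕ → Set β} {φ : TForm β} :
    sat n H T 0 (twnext (talways φ)) ↔ ∀ j, 1 ≤ j → j < n → sat n H T j φ := by
  rw [sat_twnext]
  constructor
  · intro h j h1 hn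
    exact (sat_talways.1 (h (by omega))) j h1 hn
  · intro h hn
    exact sat_talways.2 fun j h1 h2 => h j h1 h2

end Gadgets

section Unfold

variable {α : Type} {n : ℕ} {H T : ℕ → Set α} {φ ψ : TForm α}

theorem sat_since_zero : sat n H T 0 (.since φ ψ) ↔ sat n H T 0 ψ := by
  simp only [sat]
  constructor
  · rintro ⟨j, hj, h, -⟩
    obtain rfl : j = 0 := by omega
    exact h
  · intro h; exact ⟨0, le_refl _, h, fun i u v => by omega⟩

theorem sat_since_succ {k : ℕ} :
    sat n H T (k+1) (.since φ ψ) ↔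
      sat n H T (k+1) ψ ∨ (sat n H T (k+1) φ ∧ sat n H T k (.since φ ψ)) := by
  simp only [sat]
  constructor
  · rintro ⟨j, hj, h, hall⟩
    rcases eq_or_lt_of_le hj with rfl | hlt
    · exact Or.inl h
    · refine Or.inr ⟨hall _ (by omega) (le_refl _), j, by omega, h,
        fun i u v => hall i u (by omega)⟩
  · rintro (h | ⟨hφ, j, hj, h, hall⟩)
    · exact ⟨k+1, le_refl _, h, fun i u v => by omega⟩
    · refine ⟨j, by omega, h, fun i u v => ?_⟩
      rcases eq_or_lt_of_le v with rfl | hlt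
      · exact hφ
      · exact hall i u (by omega)

theorem sat_trig_zero : sat n H T 0 (.trig φ ψ) ↔ sat n H T 0 ψ := by
  simp only [sat]
  constructor
  · intro h
    rcases h 0 (le_refl _) with h | ⟨i, u, v, -⟩
    · exact h
    · omega
  · intro h j hj
    obtain rfl : j = 0 := by omega
    exact Or.inl h

theorem sat_trig_succ {k : ℕ} :
    sat n H T (k+1) (.trig φ ψ) ↔
      sat n H T (k+1) ψ ∧ (sat n H T (k+1) φ ∨ sat n H T k (.trig φ ψ)) := by
  simp only [sat]
  constructor
  · intro h
    refine ⟨?_, ?_⟩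
    · rcases h (k+1) (le_refl _) with h | ⟨i, u, v, -⟩
      · exact h
      · omega
    · by_cases hφ : sat n H T (k+1) φ
      · exact Or.inl hφ
      · refine Or.inr fun j hj => ?_
        rcases h j (by omega) with h | ⟨i, u, v, w⟩
        · exact Or.inl h
        · rcases eq_or_lt_of_le v with rfl | hlt
          · exact absurd w hφ
          · exact Or.inr ⟨i, u, by omega, w⟩
  · rintro ⟨hψ, hd⟩ j hj
    rcases eq_or_lt_of_le hj with rfl | hlt
    · exact Or.inl hψ
    · rcases hd with hφ | h
      · exact Or.inr ⟨k+1, by omega, le_refl _, hφ⟩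
      · rcases h j (by omega) with h | ⟨i, u, v, w⟩
        · exact Or.inl h
        · exact Or.inr ⟨i, u, by omega, w⟩

theorem sat_untl_last {k : ℕ} (hk : k + 1 = n) :
    sat n H T k (.untl φ ψ) ↔ sat n H T k ψ := by
  simp only [sat]
  constructor
  · rintro ⟨j, hj, hjn, h, -⟩
    obtain rfl : j = k := by omega
    exact h
  · intro h; exact ⟨k, le_refl _, by omega, h, fun i u v => by omega⟩

theorem sat_untl_succ {k : ℕ} (hk : k + 1 < n) :
    sat n H T k (.untl φ ψ) ↔
      sat n H T k ψ ∨ (sat n H T k φ ∧ sat n H T (k+1) (.untl φ ψ)) := by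
  simp only [sat]
  constructor
  · rintro ⟨j, hj, hjn, h, hall⟩
    rcases eq_or_lt_of_le hj with rfl | hlt
    · exact Or.inl h
    · refine Or.inr ⟨hall _ (le_refl _) (by omega), j, by omega, hjn, h,
        fun i u v => hall i (by omega) v⟩
  · rintro (h | ⟨hφ, j, hj, hjn, h, hall⟩)
    · exact ⟨k, le_refl _, by omega, h, fun i u v => by omega⟩
    · refine ⟨j, by omega, hjn, h, fun i u v => ?_⟩
      rcases eq_or_lt_of_le u with rfl | hlt
      · exact hφ
      · exact hall i (by omega) v

theorem sat_rels_last {k : ℕ} (hk : k + 1 = n) :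
    sat n H T k (.rels φ ψ) ↔ sat n H T k ψ := by
  simp only [sat]
  constructor
  · intro h
    rcases h k (le_refl _) (by omega) with h | ⟨i, u, v, -⟩
    · exact h
    · omega
  · intro h j hj hjn
    obtain rfl : j = k := by omega
    exact Or.inl h

theorem sat_rels_succ {k : ℕ} (hk : k + 1 < n) :
    sat n H T k (.rels φ ψ) ↔
      sat n H T k ψ ∧ (sat n H T k φ ∨ sat n H T (k+1) (.rels φ ψ)) := by
  simp only [sat]
  constructor
  · intro h
    refine ⟨?_, ?_⟩
    · rcases h k (le_refl _) (by omega) with h | ⟨i, u, v, -⟩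
      · exact h
      · omega
    · by_cases hφ : sat n H T k φ
      · exact Or.inl hφ
      · refine Or.inr fun j hj hjn => ?_
        rcases h j (by omega) hjn with h | ⟨i, u, v, w⟩
        · exact Or.inl h
        · rcases eq_or_lt_of_le u with rfl | hlt
          · exact absurd w hφ
          · exact Or.inr ⟨i, by omega, by omega, w⟩
  · rintro ⟨hψ, hd⟩ j hj hjn
    rcases eq_or_lt_of_le hj with rfl | hlt
    · exact Or.inl hψ
    · rcases hd with hφ | h
      · exact Or.inr ⟨k, le_refl _, by omega, hφ⟩
      · rcases h j (by omega) hjn with h | ⟨i, u, v, w⟩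
        · exact Or.inl h
        · exact Or.inr ⟨i, by omega, v, w⟩

end Unfold
section Subf

variable {α : Type} {n : ℕ}

theorem mem_subf_self : ∀ φ : TForm α, φ ∈ subf φ := by
  intro φ
  cases φ <;> simp [subf]

theorem subf_trans : ∀ μ ν : TForm α, ν ∈ subf μ → subf ν ⊆ subf μ := by
  intro μ
  induction μ with
  | bot => intro ν h; simp [subf] at h; subst h; simp [subf]
  | atom a => intro ν h; simp [subf] at h; subst h; simp [subf]
  | conj φ ψ ihφ ihψ =>
      intro ν h
      rcases h with h | h | h
      · subst h; exact le_refl _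
      · exact (ihφ ν h).trans (fun x hx => Or.inr (Or.inl hx))
      · exact (ihψ ν h).trans (fun x hx => Or.inr (Or.inr hx))
  | disj φ ψ ihφ ihψ =>
      intro ν h
      rcases h with h | h | h
      · subst h; exact le_refl _
      · exact (ihφ ν h).trans (fun x hx => Or.inr (Or.inl hx))
      · exact (ihψ ν h).trans (fun x hx => Or.inr (Or.inr hx))
  | impl φ ψ ihφ ihψ =>
      intro ν h
      rcases h with h | h | h
      · subst h; exact le_refl _
      · exact (ihφ ν h).trans (fun x hx => Or.inr (Or.inl hx))
      · exact (ihψ ν h).trans (fun x hx => Or.inr (Or.inr hx))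
  | prev φ ih =>
      intro ν h
      rcases h with h | h
      · subst h; exact le_refl _
      · exact (ih ν h).trans (fun x hx => Or.inr hx)
  | since φ ψ ihφ ihψ =>
      intro ν h
      rcases h with h | h | h
      · subst h; exact le_refl _
      · exact (ihφ ν h).trans (fun x hx => Or.inr (Or.inl hx))
      · exact (ihψ ν h).trans (fun x hx => Or.inr (Or.inr hx))
  | trig φ ψ ihφ ihψ =>
      intro ν h
      rcases h with h | h | h
      · subst h; exact le_refl _
      · exact (ihφ ν h).trans (fun x hx => Or.inr (Or.inl hx))
      · exact (ihψ ν h).trans (fun x hx => Or.inr (Or.inr hx))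
  | next φ ih =>
      intro ν h
      rcases h with h | h
      · subst h; exact le_refl _
      · exact (ih ν h).trans (fun x hx => Or.inr hx)
  | untl φ ψ ihφ ihψ =>
      intro ν h
      rcases h with h | h | h
      · subst h; exact le_refl _
      · exact (ihφ ν h).trans (fun x hx => Or.inr (Or.inl hx))
      · exact (ihψ ν h).trans (fun x hx => Or.inr (Or.inr hx))
  | rels φ ψ ihφ ihψ =>
      intro ν h
      rcases h with h | h | h
      · subst h; exact le_refl _
      · exact (ihφ ν h).trans (fun x hx => Or.inr (Or.inl hx))
      · exact (ihψ ν h).trans (fun x hx => Or.inr (Or.inr hx))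

theorem subfTh_closed {Γ : Set (TForm α)} {μ : TForm α} (h : μ ∈ subfTh Γ) :
    subf μ ⊆ subfTh Γ := by
  simp only [subfTh, Set.mem_iUnion] at h ⊢
  obtain ⟨φ, hφ, hμ⟩ := h
  intro ν hν
  exact Set.mem_iUnion₂.mpr ⟨φ, hφ, subf_trans φ μ hμ hν⟩

theorem mem_subfTh {Γ : Set (TForm α)} {φ : TForm α} (h : φ ∈ Γ) : φ ∈ subfTh Γ :=
  Set.mem_iUnion₂.mpr ⟨φ, h, mem_subf_self φ⟩

/-- Formulas whose label is a fresh atom. -/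
def isLbl : TForm α → Prop
  | .bot => False
  | .atom _ => False
  | _ => True

theorem sat_lab_inr {H' T' : ℕ → Set (ExtAlph α)} {μ : TForm α} (h : isLbl μ) {k : ℕ} :
    sat n H' T' k (lab μ) ↔ Sum.inr μ ∈ H' k := by
  cases μ <;> simp [isLbl] at h <;> simp [lab, sat]

end Subf
section Sound

variable {α : Type} {n : ℕ}

/-- The labels of the formulas of `S` behave canonically for `⟨H,T⟩`. -/
def Canon (n : ℕ) (S : Set (TForm α)) (H T : ℕ → Set α)
    (H' T' : ℕ → Set (ExtAlph α)) : Prop :=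
  ∀ μ ∈ S, ∀ k < n,
    (sat n H' T' k (lab μ) ↔ sat n H T k μ) ∧
    (sat n T' T' k (lab μ) ↔ sat n T T k μ)

theorem eta_sound {S : Set (TForm α)} {H T : ℕ → Set α}
    {H' T' : ℕ → Set (ExtAlph α)} (hn : 0 < n)
    (hC : Canon n S H T H' T') {μ : TForm α} (hμ : μ ∈ S) (hsub : subf μ ⊆ S) :
    ∀ δ ∈ eta μ, sat n H' T' 0 δ := by
  cases μ with
  | bot => rintro δ ⟨⟩
  | atom a => rintro δ ⟨⟩
  | conj φ ψ =>
      have hφ : φ ∈ S := hsub (by simp [subf, mem_subf_self])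
      have hψ : ψ ∈ S := hsub (by simp [subf, mem_subf_self])
      rintro δ rfl
      rw [sat_talways]
      intro j _ hj
      rw [sat_tiff]
      constructor
      · rw [(hC _ hμ j hj).1]
        simp only [sat]
        rw [(hC _ hφ j hj).1, (hC _ hψ j hj).1]
      · rw [(hC _ hμ j hj).2]
        simp only [sat]
        rw [(hC _ hφ j hj).2, (hC _ hψ j hj).2]
  | disj φ ψ =>
      have hφ : φ ∈ S := hsub (by simp [subf, mem_subf_self])
      have hψ : ψ ∈ S := hsub (by simp [subf, mem_subf_self])
      rintro δ rfl
      rw [sat_talways]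
      intro j _ hj
      rw [sat_tiff]
      constructor
      · rw [(hC _ hμ j hj).1]
        simp only [sat]
        rw [(hC _ hφ j hj).1, (hC _ hψ j hj).1]
      · rw [(hC _ hμ j hj).2]
        simp only [sat]
        rw [(hC _ hφ j hj).2, (hC _ hψ j hj).2]
  | impl φ ψ =>
      have hφ : φ ∈ S := hsub (by simp [subf, mem_subf_self])
      have hψ : ψ ∈ S := hsub (by simp [subf, mem_subf_self])
      rintro δ rfl
      rw [sat_talways]
      intro j _ hj
      rw [sat_tiff]
      constructor
      · rw [(hC _ hμ j hj).1]
        simp only [sat]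
        rw [(hC _ hφ j hj).1, (hC _ hψ j hj).1, (hC _ hφ j hj).2, (hC _ hψ j hj).2]
      · rw [(hC _ hμ j hj).2]
        simp only [sat]
        rw [(hC _ hφ j hj).2, (hC _ hψ j hj).2]
  | prev φ =>
      have hφ : φ ∈ S := hsub (by simp [subf, mem_subf_self])
      rintro δ (rfl | rfl)
      · rw [sat_wa]
        intro j h1 hj
        rw [sat_tiff]
        have hj' : j - 1 < n := by omega
        constructor
        · rw [(hC _ hμ j hj).1]
          simp only [sat]
          rw [(hC _ hφ _ hj').1]
        · rw [(hC _ hμ j hj).2]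
          simp only [sat]
          rw [(hC _ hφ _ hj').2]
      · rw [sat_tneg]
        constructor
        · rw [(hC _ hμ 0 hn).1]; simp [sat]
        · rw [(hC _ hμ 0 hn).2]; simp [sat]
  | since φ ψ =>
      have hφ : φ ∈ S := hsub (by simp [subf, mem_subf_self])
      have hψ : ψ ∈ S := hsub (by simp [subf, mem_subf_self])
      have hm : ∀ k, k < n →
          ((Sum.inr (TForm.since φ ψ) ∈ H' k ↔ sat n H T k (TForm.since φ ψ)) ∧
           (Sum.inr (TForm.since φ ψ) ∈ T' k ↔ sat n T T k (TForm.since φ ψ))) :=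
        fun k hk => ⟨(sat_lab_inr (by trivial)).symm.trans (hC _ hμ k hk).1,
                     (sat_lab_inr (by trivial)).symm.trans (hC _ hμ k hk).2⟩
      rintro δ (rfl | rfl)
      · rw [sat_wa]
        intro j h1 hj
        obtain ⟨j, rfl⟩ : ∃ m, j = m + 1 := ⟨j - 1, by omega⟩
        have hj' : j < n := by omega
        rw [sat_tiff]
        constructor
        · simp only [sat, Nat.add_sub_cancel, sat_lab_inr (μ := TForm.since φ ψ) trivial]
          rw [(hm _ hj).1, (hm _ hj').1, (hC _ hφ _ hj).1, (hC _ hψ _ hj).1,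
            sat_since_succ]
          simp
        · simp only [sat, Nat.add_sub_cancel, sat_lab_inr (μ := TForm.since φ ψ) trivial]
          rw [(hm _ hj).2, (hm _ hj').2, (hC _ hφ _ hj).2, (hC _ hψ _ hj).2,
            sat_since_succ]
          simp
      · rw [sat_tiff]
        constructor
        · rw [(hC _ hμ 0 hn).1, (hC _ hψ 0 hn).1, sat_since_zero]
        · rw [(hC _ hμ 0 hn).2, (hC _ hψ 0 hn).2, sat_since_zero]
  | trig φ ψ =>
      have hφ : φ ∈ S := hsub (by simp [subf, mem_subf_self])
      have hψ : ψ ∈ S := hsub (by simp [subf, mem_subf_self])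
      have hm : ∀ k, k < n →
          ((Sum.inr (TForm.trig φ ψ) ∈ H' k ↔ sat n H T k (TForm.trig φ ψ)) ∧
           (Sum.inr (TForm.trig φ ψ) ∈ T' k ↔ sat n T T k (TForm.trig φ ψ))) :=
        fun k hk => ⟨(sat_lab_inr (by trivial)).symm.trans (hC _ hμ k hk).1,
                     (sat_lab_inr (by trivial)).symm.trans (hC _ hμ k hk).2⟩
      rintro δ (rfl | rfl)
      · rw [sat_wa]
        intro j h1 hj
        obtain ⟨j, rfl⟩ : ∃ m, j = m + 1 := ⟨j - 1, by omega⟩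
        have hj' : j < n := by omega
        rw [sat_tiff]
        constructor
        · simp only [sat, Nat.add_sub_cancel, sat_lab_inr (μ := TForm.trig φ ψ) trivial]
          rw [(hm _ hj).1, (hm _ hj').1, (hC _ hφ _ hj).1, (hC _ hψ _ hj).1,
            sat_trig_succ]
          simp
        · simp only [sat, Nat.add_sub_cancel, sat_lab_inr (μ := TForm.trig φ ψ) trivial]
          rw [(hm _ hj).2, (hm _ hj').2, (hC _ hφ _ hj).2, (hC _ hψ _ hj).2,
            sat_trig_succ]
          simp
      · rw [sat_tiff]
        constructor
        · rw [(hC _ hμ 0 hn).1, (hC _ hψ 0 hn).1, sat_trig_zero]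
        · rw [(hC _ hμ 0 hn).2, (hC _ hψ 0 hn).2, sat_trig_zero]
  | next φ =>
      have hφ : φ ∈ S := hsub (by simp [subf, mem_subf_self])
      have hm : ∀ k, k < n →
          ((Sum.inr (TForm.next φ) ∈ H' k ↔ sat n H T k (TForm.next φ)) ∧
           (Sum.inr (TForm.next φ) ∈ T' k ↔ sat n T T k (TForm.next φ))) :=
        fun k hk => ⟨(sat_lab_inr (by trivial)).symm.trans (hC _ hμ k hk).1,
                     (sat_lab_inr (by trivial)).symm.trans (hC _ hμ k hk).2⟩
      rintro δ (rfl | rfl)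
      · rw [sat_wa]
        intro j h1 hj
        obtain ⟨j, rfl⟩ : ∃ m, j = m + 1 := ⟨j - 1, by omega⟩
        have hj' : j < n := by omega
        rw [sat_tiff]
        constructor
        · simp only [sat, Nat.add_sub_cancel, sat_lab_inr (μ := TForm.next φ) trivial]
          rw [(hm _ hj').1, (hC _ hφ _ hj).1]
          simp only [sat]
          simp [hj]
        · simp only [sat, Nat.add_sub_cancel, sat_lab_inr (μ := TForm.next φ) trivial]
          rw [(hm _ hj').2, (hC _ hφ _ hj).2]
          simp only [sat]
          simp [hj]
      · rw [sat_talways]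
        intro j _ hj
        constructor
        · intro hant
          rw [sat_tneg, sat_next_ttop, sat_next_ttop] at hant
          rw [sat_tneg]
          constructor
          · rw [(hC _ hμ _ hj).1]; simp only [sat]; exact fun h => hant.1 h.1
          · rw [(hC _ hμ _ hj).2]; simp only [sat]; exact fun h => hant.1 h.1
        · intro hant
          rw [sat_tneg, sat_next_ttop] at hant
          rw [sat_tneg]
          constructor
          · rw [(hC _ hμ _ hj).2]; simp only [sat]; exact fun h => hant.1 h.1
          · rw [(hC _ hμ _ hj).2]; simp only [sat]; exact fun h => hant.1 h.1
  | untl φ ψ =>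
      have hφ : φ ∈ S := hsub (by simp [subf, mem_subf_self])
      have hψ : ψ ∈ S := hsub (by simp [subf, mem_subf_self])
      have hm : ∀ k, k < n →
          ((Sum.inr (TForm.untl φ ψ) ∈ H' k ↔ sat n H T k (TForm.untl φ ψ)) ∧
           (Sum.inr (TForm.untl φ ψ) ∈ T' k ↔ sat n T T k (TForm.untl φ ψ))) :=
        fun k hk => ⟨(sat_lab_inr (by trivial)).symm.trans (hC _ hμ k hk).1,
                     (sat_lab_inr (by trivial)).symm.trans (hC _ hμ k hk).2⟩
      rintro δ (rfl | rfl)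
      · rw [sat_wa]
        intro j h1 hj
        obtain ⟨j, rfl⟩ : ∃ m, j = m + 1 := ⟨j - 1, by omega⟩
        have hj' : j < n := by omega
        rw [sat_tiff]
        constructor
        · simp only [sat, Nat.add_sub_cancel, sat_lab_inr (μ := TForm.untl φ ψ) trivial]
          rw [(hm _ hj').1, (hm _ hj).1, (hC _ hφ _ hj').1, (hC _ hψ _ hj').1,
            sat_untl_succ hj]
          simp
        · simp only [sat, Nat.add_sub_cancel, sat_lab_inr (μ := TForm.untl φ ψ) trivial]
          rw [(hm _ hj').2, (hm _ hj).2, (hC _ hφ _ hj').2, (hC _ hψ _ hj').2,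
            sat_untl_succ hj]
          simp
      · rw [sat_talways]
        intro j _ hj
        constructor
        · intro hant
          rw [sat_tneg, sat_next_ttop, sat_next_ttop] at hant
          have hlast : j + 1 = n := by omega
          rw [sat_tiff]
          constructor
          · rw [(hC _ hμ _ hj).1, (hC _ hψ _ hj).1, sat_untl_last hlast]
          · rw [(hC _ hμ _ hj).2, (hC _ hψ _ hj).2, sat_untl_last hlast]
        · intro hant
          rw [sat_tneg, sat_next_ttop] at hant
          have hlast : j + 1 = n := by omega
          rw [sat_tiff]
          constructor
          · rw [(hC _ hμ _ hj).2, (hC _ hψ _ hj).2, sat_untl_last hlast]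
          · rw [(hC _ hμ _ hj).2, (hC _ hψ _ hj).2, sat_untl_last hlast]
  | rels φ ψ =>
      have hφ : φ ∈ S := hsub (by simp [subf, mem_subf_self])
      have hψ : ψ ∈ S := hsub (by simp [subf, mem_subf_self])
      have hm : ∀ k, k < n →
          ((Sum.inr (TForm.rels φ ψ) ∈ H' k ↔ sat n H T k (TForm.rels φ ψ)) ∧
           (Sum.inr (TForm.rels φ ψ) ∈ T' k ↔ sat n T T k (TForm.rels φ ψ))) :=
        fun k hk => ⟨(sat_lab_inr (by trivial)).symm.trans (hC _ hμ k hk).1,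
                     (sat_lab_inr (by trivial)).symm.trans (hC _ hμ k hk).2⟩
      rintro δ (rfl | rfl)
      · rw [sat_wa]
        intro j h1 hj
        obtain ⟨j, rfl⟩ : ∃ m, j = m + 1 := ⟨j - 1, by omega⟩
        have hj' : j < n := by omega
        rw [sat_tiff]
        constructor
        · simp only [sat, Nat.add_sub_cancel, sat_lab_inr (μ := TForm.rels φ ψ) trivial]
          rw [(hm _ hj').1, (hm _ hj).1, (hC _ hφ _ hj').1, (hC _ hψ _ hj').1,
            sat_rels_succ hj]
          simp
        · simp only [sat, Nat.add_sub_cancel, sat_lab_inr (μ := TForm.rels φ ψ) trivial]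
          rw [(hm _ hj').2, (hm _ hj).2, (hC _ hφ _ hj').2, (hC _ hψ _ hj').2,
            sat_rels_succ hj]
          simp
      · rw [sat_talways]
        intro j _ hj
        constructor
        · intro hant
          rw [sat_tneg, sat_next_ttop, sat_next_ttop] at hant
          have hlast : j + 1 = n := by omega
          rw [sat_tiff]
          constructor
          · rw [(hC _ hμ _ hj).1, (hC _ hψ _ hj).1, sat_rels_last hlast]
          · rw [(hC _ hμ _ hj).2, (hC _ hψ _ hj).2, sat_rels_last hlast]
        · intro hant
          rw [sat_tneg, sat_next_ttop] at hant
          have hlast : j + 1 = n := by omega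
          rw [sat_tiff]
          constructor
          · rw [(hC _ hμ _ hj).2, (hC _ hψ _ hj).2, sat_rels_last hlast]
          · rw [(hC _ hμ _ hj).2, (hC _ hψ _ hj).2, sat_rels_last hlast]

end Sound
section Complete

variable {α : Type} {n : ℕ}

theorem eta_complete {S : Set (TForm α)} {H T : ℕ → Set α}
    {H' T' : ℕ → Set (ExtAlph α)}
    (hH : ∀ k a, Sum.inl a ∈ H' k ↔ a ∈ H k)
    (hT : ∀ k a, Sum.inl a ∈ T' k ↔ a ∈ T k)
    (hS : ∀ μ ∈ S, subf μ ⊆ S)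
    (hsat : ∀ μ ∈ S, ∀ δ ∈ eta μ, sat n H' T' 0 δ) :
    Canon n S H T H' T' := by
  intro μ
  induction μ with
  | bot => intro _ k hk; simp [lab, sat]
  | atom a => intro _ k hk; simp only [lab, sat]; exact ⟨hH k a, hT k a⟩
  | conj φ ψ ihφ ihψ =>
      intro hμ k hk
      have hφ : φ ∈ S := hS _ hμ (by simp [subf, mem_subf_self])
      have hψ : ψ ∈ S := hS _ hμ (by simp [subf, mem_subf_self])
      have h := sat_tiff.1 (sat_talways.1 (hsat _ hμ _ rfl) k (Nat.zero_le _) hk)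
      constructor
      · rw [h.1]; simp only [sat]; rw [(ihφ hφ k hk).1, (ihψ hψ k hk).1]
      · rw [h.2]; simp only [sat]; rw [(ihφ hφ k hk).2, (ihψ hψ k hk).2]
  | disj φ ψ ihφ ihψ =>
      intro hμ k hk
      have hφ : φ ∈ S := hS _ hμ (by simp [subf, mem_subf_self])
      have hψ : ψ ∈ S := hS _ hμ (by simp [subf, mem_subf_self])
      have h := sat_tiff.1 (sat_talways.1 (hsat _ hμ _ rfl) k (Nat.zero_le _) hk)
      constructor
      · rw [h.1]; simp only [sat]; rw [(ihφ hφ k hk).1, (ihψ hψ k hk).1]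
      · rw [h.2]; simp only [sat]; rw [(ihφ hφ k hk).2, (ihψ hψ k hk).2]
  | impl φ ψ ihφ ihψ =>
      intro hμ k hk
      have hφ : φ ∈ S := hS _ hμ (by simp [subf, mem_subf_self])
      have hψ : ψ ∈ S := hS _ hμ (by simp [subf, mem_subf_self])
      have h := sat_tiff.1 (sat_talways.1 (hsat _ hμ _ rfl) k (Nat.zero_le _) hk)
      constructor
      · rw [h.1]; simp only [sat]
        rw [(ihφ hφ k hk).1, (ihψ hψ k hk).1, (ihφ hφ k hk).2, (ihψ hψ k hk).2]
      · rw [h.2]; simp only [sat]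
        rw [(ihφ hφ k hk).2, (ihψ hψ k hk).2]
  | prev φ ih =>
      intro hμ k hk
      have hφ : φ ∈ S := hS _ hμ (by simp [subf, mem_subf_self])
      have hwa := sat_wa.1 (hsat _ hμ _ (Set.mem_insert _ _))
      have hneg := sat_tneg.1 (hsat _ hμ _ (Set.mem_insert_of_mem _ rfl))
      rcases k with _ | k
      · constructor
        · exact iff_of_false hneg.1 (by simp [sat])
        · exact iff_of_false hneg.2 (by simp [sat])
      · have h := sat_tiff.1 (hwa (k+1) (by omega) hk)
        have hk' : k < n := by omega
        constructor
        · rw [h.1]; simp only [sat, Nat.add_sub_cancel]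
          rw [(ih hφ k hk').1]
        · rw [h.2]; simp only [sat, Nat.add_sub_cancel]
          rw [(ih hφ k hk').2]
  | since φ ψ ihφ ihψ =>
      intro hμ
      have hφ : φ ∈ S := hS _ hμ (by simp [subf, mem_subf_self])
      have hψ : ψ ∈ S := hS _ hμ (by simp [subf, mem_subf_self])
      have hrec := sat_wa.1 (hsat _ hμ _ (Set.mem_insert _ _))
      have hbase := sat_tiff.1 (hsat _ hμ _ (Set.mem_insert_of_mem _ rfl))
      intro k
      induction k with
      | zero =>
          intro hk
          constructor
          · rw [hbase.1, (ihψ hψ 0 hk).1, sat_since_zero]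
          · rw [hbase.2, (ihψ hψ 0 hk).2, sat_since_zero]
      | succ k ihk =>
          intro hk
          have hk' : k < n := by omega
          have h := sat_tiff.1 (hrec (k+1) (by omega) hk)
          have ihmH := (sat_lab_inr (by trivial)).symm.trans ((ihk hk').1)
          have ihmT := (sat_lab_inr (by trivial)).symm.trans ((ihk hk').2)
          have h1 := h.1
          have h2 := h.2
          simp only [sat, Nat.add_sub_cancel, Nat.zero_lt_succ, true_and, sat_lab_inr (μ := TForm.since φ ψ) trivial] at h1 h2
          constructor
          · rw [sat_lab_inr (by trivial), h1, (ihφ hφ _ hk).1, (ihψ hψ _ hk).1,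
              ihmH, sat_since_succ]
          · rw [sat_lab_inr (by trivial), h2, (ihφ hφ _ hk).2, (ihψ hψ _ hk).2,
              ihmT, sat_since_succ]
  | trig φ ψ ihφ ihψ =>
      intro hμ
      have hφ : φ ∈ S := hS _ hμ (by simp [subf, mem_subf_self])
      have hψ : ψ ∈ S := hS _ hμ (by simp [subf, mem_subf_self])
      have hrec := sat_wa.1 (hsat _ hμ _ (Set.mem_insert _ _))
      have hbase := sat_tiff.1 (hsat _ hμ _ (Set.mem_insert_of_mem _ rfl))
      intro k
      induction k with
      | zero =>
          intro hk
          constructor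
          · rw [hbase.1, (ihψ hψ 0 hk).1, sat_trig_zero]
          · rw [hbase.2, (ihψ hψ 0 hk).2, sat_trig_zero]
      | succ k ihk =>
          intro hk
          have hk' : k < n := by omega
          have h := sat_tiff.1 (hrec (k+1) (by omega) hk)
          have ihmH := (sat_lab_inr (by trivial)).symm.trans ((ihk hk').1)
          have ihmT := (sat_lab_inr (by trivial)).symm.trans ((ihk hk').2)
          have h1 := h.1
          have h2 := h.2
          simp only [sat, Nat.add_sub_cancel, Nat.zero_lt_succ, true_and, sat_lab_inr (μ := TForm.trig φ ψ) trivial] at h1 h2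
          constructor
          · rw [sat_lab_inr (by trivial), h1, (ihφ hφ _ hk).1, (ihψ hψ _ hk).1,
              ihmH, sat_trig_succ]
          · rw [sat_lab_inr (by trivial), h2, (ihφ hφ _ hk).2, (ihψ hψ _ hk).2,
              ihmT, sat_trig_succ]
  | next φ ih =>
      intro hμ k hk
      have hφ : φ ∈ S := hS _ hμ (by simp [subf, mem_subf_self])
      have hrec := sat_wa.1 (hsat _ hμ _ (Set.mem_insert _ _))
      have hlastf := fun j (hj : j < n) =>
        sat_talways.1 (hsat _ hμ _ (Set.mem_insert_of_mem _ rfl)) j (Nat.zero_le _) hj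
      by_cases hkn : k + 1 < n
      · have h := sat_tiff.1 (hrec (k+1) (by omega) hkn)
        have h1 := h.1
        have h2 := h.2
        simp only [sat, Nat.add_sub_cancel, Nat.zero_lt_succ, true_and, sat_lab_inr (μ := TForm.next φ) trivial] at h1 h2
        constructor
        · rw [sat_lab_inr (by trivial), h1, (ih hφ _ hkn).1]
          simp only [sat]
          simp [hkn]
        · rw [sat_lab_inr (by trivial), h2, (ih hφ _ hkn).2]
          simp only [sat]
          simp [hkn]
      · have h := hlastf k hk
        have hant : sat n H' T' k (tneg (.next (ttop : TForm (ExtAlph α)))) :=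
          sat_tneg.2 ⟨by rw [sat_next_ttop]; omega, by rw [sat_next_ttop]; omega⟩
        have hantT : sat n T' T' k (tneg (.next (ttop : TForm (ExtAlph α)))) :=
          sat_tneg.2 ⟨by rw [sat_next_ttop]; omega, by rw [sat_next_ttop]; omega⟩
        have hc := sat_tneg.1 (h.1 hant)
        have hcT := sat_tneg.1 (h.2 hantT)
        constructor
        · exact iff_of_false hc.1 fun hx => absurd hx.1 (by omega)
        · exact iff_of_false hcT.1 fun hx => absurd hx.1 (by omega)
  | untl φ ψ ihφ ihψ =>
      intro hμ
      have hφ : φ ∈ S := hS _ hμ (by simp [subf, mem_subf_self])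
      have hψ : ψ ∈ S := hS _ hμ (by simp [subf, mem_subf_self])
      have hrec := sat_wa.1 (hsat _ hμ _ (Set.mem_insert _ _))
      have hlastf := fun j (hj : j < n) =>
        sat_talways.1 (hsat _ hμ _ (Set.mem_insert_of_mem _ rfl)) j (Nat.zero_le _) hj
      have key : ∀ d k, k < n → n = k + d + 1 →
          ((sat n H' T' k (lab (TForm.untl φ ψ)) ↔ sat n H T k (TForm.untl φ ψ)) ∧
           (sat n T' T' k (lab (TForm.untl φ ψ)) ↔ sat n T T k (TForm.untl φ ψ))) := by
        intro d
        induction d with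
        | zero =>
            intro k hk he
            have h := hlastf k hk
            have hant : sat n H' T' k (tneg (.next (ttop : TForm (ExtAlph α)))) :=
              sat_tneg.2 ⟨by rw [sat_next_ttop]; omega, by rw [sat_next_ttop]; omega⟩
            have hantT : sat n T' T' k (tneg (.next (ttop : TForm (ExtAlph α)))) :=
              sat_tneg.2 ⟨by rw [sat_next_ttop]; omega, by rw [sat_next_ttop]; omega⟩
            have hc := sat_tiff.1 (h.1 hant)
            have hcT := sat_tiff.1 (h.2 hantT)
            constructor
            · rw [hc.1, (ihψ hψ _ hk).1, sat_untl_last (by omega)]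
            · rw [hcT.2, (ihψ hψ _ hk).2, sat_untl_last (by omega)]
        | succ d ihd =>
            intro k hk he
            have hk1 : k + 1 < n := by omega
            have ih1 := ihd (k+1) hk1 (by omega)
            have ihmH := (sat_lab_inr (by trivial)).symm.trans ih1.1
            have ihmT := (sat_lab_inr (by trivial)).symm.trans ih1.2
            have h := sat_tiff.1 (hrec (k+1) (by omega) hk1)
            have h1 := h.1
            have h2 := h.2
            simp only [sat, Nat.add_sub_cancel, Nat.zero_lt_succ, true_and, sat_lab_inr (μ := TForm.untl φ ψ) trivial] at h1 h2
            constructor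
            · rw [sat_lab_inr (by trivial), h1, (ihψ hψ _ hk).1, (ihφ hφ _ hk).1,
                ihmH, sat_untl_succ hk1]
            · rw [sat_lab_inr (by trivial), h2, (ihψ hψ _ hk).2, (ihφ hφ _ hk).2,
                ihmT, sat_untl_succ hk1]
      exact fun k hk => key (n - k - 1) k hk (by omega)
  | rels φ ψ ihφ ihψ =>
      intro hμ
      have hφ : φ ∈ S := hS _ hμ (by simp [subf, mem_subf_self])
      have hψ : ψ ∈ S := hS _ hμ (by simp [subf, mem_subf_self])
      have hrec := sat_wa.1 (hsat _ hμ _ (Set.mem_insert _ _))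
      have hlastf := fun j (hj : j < n) =>
        sat_talways.1 (hsat _ hμ _ (Set.mem_insert_of_mem _ rfl)) j (Nat.zero_le _) hj
      have key : ∀ d k, k < n → n = k + d + 1 →
          ((sat n H' T' k (lab (TForm.rels φ ψ)) ↔ sat n H T k (TForm.rels φ ψ)) ∧
           (sat n T' T' k (lab (TForm.rels φ ψ)) ↔ sat n T T k (TForm.rels φ ψ))) := by
        intro d
        induction d with
        | zero =>
            intro k hk he
            have h := hlastf k hk
            have hant : sat n H' T' k (tneg (.next (ttop : TForm (ExtAlph α)))) :=
              sat_tneg.2 ⟨by rw [sat_next_ttop]; omega, by rw [sat_next_ttop]; omega⟩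
            have hantT : sat n T' T' k (tneg (.next (ttop : TForm (ExtAlph α)))) :=
              sat_tneg.2 ⟨by rw [sat_next_ttop]; omega, by rw [sat_next_ttop]; omega⟩
            have hc := sat_tiff.1 (h.1 hant)
            have hcT := sat_tiff.1 (h.2 hantT)
            constructor
            · rw [hc.1, (ihψ hψ _ hk).1, sat_rels_last (by omega)]
            · rw [hcT.2, (ihψ hψ _ hk).2, sat_rels_last (by omega)]
        | succ d ihd =>
            intro k hk he
            have hk1 : k + 1 < n := by omega
            have ih1 := ihd (k+1) hk1 (by omega)
            have ihmH := (sat_lab_inr (by trivial)).symm.trans ih1.1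
            have ihmT := (sat_lab_inr (by trivial)).symm.trans ih1.2
            have h := sat_tiff.1 (hrec (k+1) (by omega) hk1)
            have h1 := h.1
            have h2 := h.2
            simp only [sat, Nat.add_sub_cancel, Nat.zero_lt_succ, true_and, sat_lab_inr (μ := TForm.rels φ ψ) trivial] at h1 h2
            constructor
            · rw [sat_lab_inr (by trivial), h1, (ihψ hψ _ hk).1, (ihφ hφ _ hk).1,
                ihmH, sat_rels_succ hk1]
            · rw [sat_lab_inr (by trivial), h2, (ihψ hψ _ hk).2, (ihφ hφ _ hk).2,
                ihmT, sat_rels_succ hk1]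
      exact fun k hk => key (n - k - 1) k hk (by omega)

end Complete
section Assemble

variable {α β : Type} {n : ℕ}

/-- Canonical total extension of a trace over the extended alphabet. -/
def extT (n : ℕ) (S : Set (TForm α)) (H T : ℕ → Set α) : ℕ → Set (ExtAlph α) :=
  fun k => {x | match x with
    | Sum.inl a => a ∈ H k
    | Sum.inr μ => μ ∈ S ∧ isLbl μ ∧ sat n H T k μ}

theorem mem_extT_inl {S : Set (TForm α)} {H T : ℕ → Set α} {k : ℕ} {a : α} :
    Sum.inl a ∈ extT n S H T k ↔ a ∈ H k := Iff.rfl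

theorem mem_extT_inr {S : Set (TForm α)} {H T : ℕ → Set α} {k : ℕ} {μ : TForm α} :
    Sum.inr μ ∈ extT n S H T k ↔ μ ∈ S ∧ isLbl μ ∧ sat n H T k μ := Iff.rfl

theorem pad_lt {X : Fin n → Set β} {k : ℕ} (hk : k < n) :
    pad n X k = X ⟨k, hk⟩ := dif_pos hk

theorem pad_ge {X : Fin n → Set β} {k : ℕ} (hk : ¬ k < n) :
    pad n X k = ∅ := dif_neg hk

theorem pad_mono {X Y : Fin n → Set β} (h : ∀ i, X i ⊆ Y i) :
    ∀ k, pad n X k ⊆ pad n Y k := by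
  intro k
  by_cases hk : k < n
  · rw [pad_lt hk, pad_lt hk]; exact h _
  · rw [pad_ge hk]; exact Set.empty_subset _

theorem preim_pad {X' : Fin n → Set (ExtAlph α)} {X : Fin n → Set α}
    (h : ∀ (i : Fin n) a, Sum.inl a ∈ X' i ↔ a ∈ X i) :
    (fun i => Sum.inl ⁻¹' pad n X' i) = pad n X := by
  funext k
  ext a
  by_cases hk : k < n
  · rw [Set.mem_preimage, pad_lt hk, pad_lt hk]; exact h _ a
  · rw [Set.mem_preimage, pad_ge hk, pad_ge hk]; exact Iff.rfl

theorem inl_pad {X' : Fin n → Set (ExtAlph α)} {X : Fin n → Set α}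
    (h : ∀ (i : Fin n) a, Sum.inl a ∈ X' i ↔ a ∈ X i) :
    ∀ (k : ℕ) (a : α), Sum.inl a ∈ pad n X' k ↔ a ∈ pad n X k := by
  intro k a
  by_cases hk : k < n
  · rw [pad_lt hk, pad_lt hk]; exact h _ a
  · rw [pad_ge hk, pad_ge hk]; exact Iff.rfl

theorem sat_lab_extT (n : ℕ) (S : Set (TForm α)) (H T : ℕ → Set α)
    (T'' : ℕ → Set (ExtAlph α)) {μ : TForm α} (hμ : μ ∈ S) {k : ℕ} (hk : k < n) :
    sat n (pad n (fun i : Fin n => extT n S H T i.val)) T'' k (lab μ) ↔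
      sat n H T k μ := by
  have hp : pad n (fun i : Fin n => extT n S H T i.val) k = extT n S H T k := by
    rw [pad_lt hk]
  cases μ with
  | bot => simp [lab, sat]
  | atom a =>
      show Sum.inl a ∈ pad n (fun i : Fin n => extT n S H T i.val) k ↔ _
      rw [hp, mem_extT_inl]; exact Iff.rfl
  | conj φ ψ =>
      rw [sat_lab_inr (by trivial), hp, mem_extT_inr]; simp [isLbl, hμ]
  | disj φ ψ =>
      rw [sat_lab_inr (by trivial), hp, mem_extT_inr]; simp [isLbl, hμ]
  | impl φ ψ =>
      rw [sat_lab_inr (by trivial), hp, mem_extT_inr]; simp [isLbl, hμ]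
  | prev φ =>
      rw [sat_lab_inr (by trivial), hp, mem_extT_inr]; simp [isLbl, hμ]
  | since φ ψ =>
      rw [sat_lab_inr (by trivial), hp, mem_extT_inr]; simp [isLbl, hμ]
  | trig φ ψ =>
      rw [sat_lab_inr (by trivial), hp, mem_extT_inr]; simp [isLbl, hμ]
  | next φ =>
      rw [sat_lab_inr (by trivial), hp, mem_extT_inr]; simp [isLbl, hμ]
  | untl φ ψ =>
      rw [sat_lab_inr (by trivial), hp, mem_extT_inr]; simp [isLbl, hμ]
  | rels φ ψ =>
      rw [sat_lab_inr (by trivial), hp, mem_extT_inr]; simp [isLbl, hμ]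

end Assemble
/-- Corollary: For any theory `Γ` over `α`, any theory `Γ'` over
the same alphabet and any length `n > 0`:
`TSM(Γ ∪ Γ') = {⟨H',T'⟩|_𝒜 | ⟨H',T'⟩ ∈ TSM(σ(Γ) ∪ Γ')}`,
i.e. `Γ` and `σ(Γ)` are strongly equivalent modulo the auxiliary atoms
(`Γ'` is read over the extended alphabet via the inclusion of `𝒜` into `𝒜⁺`). -/
theorem strong_equivalence {α : Type} (Γ Γ' : Set (TForm α)) (n : ℕ) (hlen : 0 < n) :
    TSM n (Γ ∪ Γ') =
      {Tt : Fin n → Set α |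
        ∃ Tt' ∈ TSM n (sigmaT Γ ∪ (TForm.map Sum.inl '' Γ')),
          Tt = fun i => {a | Sum.inl a ∈ Tt' i}} := by
  classical
  have hScl : ∀ μ ∈ subfTh Γ, subf μ ⊆ subfTh Γ := fun μ hμ => subfTh_closed hμ
  ext Tt
  simp only [Set.mem_setOf_eq]
  constructor
  · -- forward direction
    intro hTt
    have hTsat := hTt.1
    have hTmin := hTt.2
    refine ⟨fun i : Fin n => extT n (subfTh Γ) (pad n Tt) (pad n Tt) i.val, ⟨?_, ?_⟩, ?_⟩
    case _ =>
      -- the canonical extension satisfies σ(Γ) ∪ Γ'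
      have hC : Canon n (subfTh Γ) (pad n Tt) (pad n Tt)
          (pad n (fun i : Fin n => extT n (subfTh Γ) (pad n Tt) (pad n Tt) i.val))
          (pad n (fun i : Fin n => extT n (subfTh Γ) (pad n Tt) (pad n Tt) i.val)) :=
        fun μ hμ k hk =>
          ⟨sat_lab_extT n _ _ _ _ hμ hk, sat_lab_extT n _ _ _ _ hμ hk⟩
      rintro δ (hδ | ⟨φ, hφ, rfl⟩)
      · rcases hδ with ⟨φ, hφ, rfl⟩ | hδ
        · exact (hC φ (mem_subfTh hφ) 0 hlen).1.mpr (hTsat φ (Or.inl hφ))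
        · obtain ⟨μ, hμ, hδ⟩ := Set.mem_iUnion₂.1 hδ
          exact eta_sound hlen hC hμ (hScl _ hμ) _ hδ
      · rw [sat_map, preim_pad
          (X' := fun i : Fin n => extT n (subfTh Γ) (pad n Tt) (pad n Tt) i.val)
          (X := Tt) (fun i a => by rw [mem_extT_inl, pad_lt i.isLt, Fin.eta])]
        exact hTsat φ (Or.inr hφ)
    case _ =>
      -- minimality of the canonical extension
      rintro ⟨Hh', hsub, hne, hsat'⟩
      have hinl : ∀ (i : Fin n) (a : α),
          Sum.inl a ∈ extT n (subfTh Γ) (pad n Tt) (pad n Tt) i.val ↔ a ∈ Tt i :=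
        fun i a => by rw [mem_extT_inl, pad_lt i.isLt, Fin.eta]
      have hC' : Canon n (subfTh Γ) (pad n (fun i => {a | Sum.inl a ∈ Hh' i}))
          (pad n Tt) (pad n Hh')
          (pad n (fun i : Fin n => extT n (subfTh Γ) (pad n Tt) (pad n Tt) i.val)) :=
        eta_complete (inl_pad fun i a => Iff.rfl) (inl_pad hinl) hScl
          (fun μ hμ δ hδ => hsat' δ (Or.inl (Or.inr (Set.mem_biUnion hμ hδ))))
      have hsubα : ∀ i, {a | Sum.inl a ∈ Hh' i} ⊆ Tt i :=
        fun i a ha => (hinl i a).1 (hsub i ha)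
      by_cases hne₀ : (fun i => {a | Sum.inl a ∈ Hh' i}) = Tt
      · -- restrictions agree, hence the traces agree: contradiction with hne
        apply hne
        funext i
        ext x
        cases x with
        | inl a =>
            have h1 : a ∈ {a | Sum.inl a ∈ Hh' i} ↔ a ∈ Tt i :=
              Set.ext_iff.1 (congrFun hne₀ i) a
            exact h1.trans (hinl i a).symm
        | inr μ =>
            constructor
            · exact fun h => hsub i h
            · intro h
              obtain ⟨hμS, hLbl, hsatμ⟩ := (mem_extT_inr).1 h
              have h1 := (hC' μ hμS i.val i.isLt).1
              rw [sat_lab_inr hLbl] at h1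
              have hx : sat n (pad n (fun i => {a | Sum.inl a ∈ Hh' i})) (pad n Tt)
                  i.val μ := by rw [hne₀]; exact hsatμ
              have h2 := h1.2 hx
              rwa [pad_lt i.isLt, Fin.eta] at h2
      · exfalso
        apply hTmin
        refine ⟨fun i => {a | Sum.inl a ∈ Hh' i}, hsubα, hne₀, ?_⟩
        rintro δ (hδ | hδ)
        · exact (hC' δ (mem_subfTh hδ) 0 hlen).1.mp
            (hsat' (lab δ) (Or.inl (Or.inl ⟨δ, hδ, rfl⟩)))
        · have h := hsat' (TForm.map Sum.inl δ) (Or.inr ⟨δ, hδ, rfl⟩)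
          rw [sat_map, preim_pad (X' := Hh')
            (X := fun i => {a | Sum.inl a ∈ Hh' i}) (fun i a => Iff.rfl),
            preim_pad
            (X' := fun i : Fin n => extT n (subfTh Γ) (pad n Tt) (pad n Tt) i.val)
            (X := Tt) hinl] at h
          exact h
    case _ =>
      funext i
      ext a
      exact ((fun i a => by
        rw [mem_extT_inl, pad_lt i.isLt, Fin.eta] :
          ∀ (i : Fin n) (a : α),
            Sum.inl a ∈ extT n (subfTh Γ) (pad n Tt) (pad n Tt) i.val ↔ a ∈ Tt i)
        i a).symm
  · -- backward direction
    rintro ⟨Tt', hTSM, rfl⟩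
    have hsat' := hTSM.1
    have hmin' := hTSM.2
    have hC : Canon n (subfTh Γ) (pad n (fun i => {a | Sum.inl a ∈ Tt' i}))
        (pad n (fun i => {a | Sum.inl a ∈ Tt' i})) (pad n Tt') (pad n Tt') :=
      eta_complete (inl_pad fun i a => Iff.rfl) (inl_pad fun i a => Iff.rfl) hScl
        (fun μ hμ δ hδ => hsat' δ (Or.inl (Or.inr (Set.mem_biUnion hμ hδ))))
    refine ⟨?_, ?_⟩
    · rintro δ (hδ | hδ)
      · exact (hC δ (mem_subfTh hδ) 0 hlen).1.mp
          (hsat' (lab δ) (Or.inl (Or.inl ⟨δ, hδ, rfl⟩)))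
      · have h := hsat' (TForm.map Sum.inl δ) (Or.inr ⟨δ, hδ, rfl⟩)
        rw [sat_map, preim_pad (X' := Tt')
          (X := fun i => {a | Sum.inl a ∈ Tt' i}) (fun i a => Iff.rfl)] at h
        exact h
    · rintro ⟨Hh, hsubα, hneα, hsatα⟩
      apply hmin'
      have hpadsub : ∀ k, pad n Hh k ⊆
          pad n (fun i => {a | Sum.inl a ∈ Tt' i}) k := pad_mono hsubα
      have hinle : ∀ (i : Fin n) (a : α),
          Sum.inl a ∈ extT n (subfTh Γ) (pad n Hh)
            (pad n (fun i => {a | Sum.inl a ∈ Tt' i})) i.val ↔ a ∈ Hh i :=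
        fun i a => by rw [mem_extT_inl, pad_lt i.isLt, Fin.eta]
      have hC2 : Canon n (subfTh Γ) (pad n Hh)
          (pad n (fun i => {a | Sum.inl a ∈ Tt' i}))
          (pad n (fun i : Fin n => extT n (subfTh Γ) (pad n Hh)
            (pad n (fun i => {a | Sum.inl a ∈ Tt' i})) i.val)) (pad n Tt') :=
        fun μ hμ k hk => ⟨sat_lab_extT n _ _ _ _ hμ hk, (hC μ hμ k hk).1⟩
      refine ⟨fun i : Fin n => extT n (subfTh Γ) (pad n Hh)
        (pad n (fun i => {a | Sum.inl a ∈ Tt' i})) i.val, ?_, ?_, ?_⟩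
      · -- subset
        intro i x hx
        cases x with
        | inl a =>
            have ha : a ∈ Hh i := (hinle i a).1 hx
            exact hsubα i ha
        | inr μ =>
            obtain ⟨hμS, hLbl, hsatμ⟩ := (mem_extT_inr).1 hx
            have hTT : sat n (pad n (fun i => {a | Sum.inl a ∈ Tt' i}))
                (pad n (fun i => {a | Sum.inl a ∈ Tt' i})) i.val μ :=
              sat_mono hpadsub μ i.val hsatμ
            have h := (hC μ hμS i.val i.isLt).1.mpr hTT
            rw [sat_lab_inr hLbl] at h
            rwa [pad_lt i.isLt, Fin.eta] at h
      · -- different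
        intro hEq
        apply hneα
        funext i
        ext a
        have h1 := hinle i a
        rw [← h1, congrFun hEq i]
        exact Iff.rfl
      · -- satisfaction
        rintro δ (hδ | hδ)
        · rcases hδ with ⟨φ, hφ, rfl⟩ | hδ
          · exact (hC2 φ (mem_subfTh hφ) 0 hlen).1.mpr (hsatα φ (Or.inl hφ))
          · obtain ⟨μ, hμ, hδ⟩ := Set.mem_iUnion₂.1 hδ
            exact eta_sound hlen hC2 hμ (hScl _ hμ) _ hδ
        · obtain ⟨φ, hφ, rfl⟩ := hδ
          rw [sat_map, preim_pad
            (X' := fun i : Fin n => extT n (subfTh Γ) (pad n Hh)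
              (pad n (fun i => {a | Sum.inl a ∈ Tt' i})) i.val)
            (X := Hh) hinle,
            preim_pad (X' := Tt')
            (X := fun i => {a | Sum.inl a ∈ Tt' i}) (fun i a => Iff.rfl)]
          exact hsatα φ (Or.inr hφ)
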